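/- The number of fixed-point-free involutions of {1,...,2h} avoiding 4321 equals the Catalan number C_h, and moreover a fixed-point-free involution avoids 4321 if and only if it avoids 321; i.e., the set of fixed-point-free involutions of {1,...,2h} avoiding 321 coincides with the set avoiding 4321. -/

import Mathlib

open DyckStep Finset

/-! ### Counting helpers -/

lemma count_take_eq {α} [DecidableEq α] (l : List α) (x : α) (m : ℕ) :
    ((l.take m).count x) = ((Finset.range m).filter (fun i => l[i]? = some x)).card := by
  induction m with
  | zero => simp
  | succ m ih =>
    rw [List.take_succ, List.count_append, ih, Finset.range_add_one, Finset.filter_insert]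
    by_cases hm : l[m]? = some x
    · rw [if_pos hm, Finset.card_insert_of_notMem (by simp)]
      simp [hm]
    · rw [if_neg hm]
      cases h' : l[m]? with
      | none => simp
      | some a =>
        have : a ≠ x := by rintro rfl; exact hm h'
        simp [h', List.count_singleton', this]

lemma count_take_card {n : ℕ} (l : List DyckStep) (x : DyckStep) (m : ℕ) (hm : m ≤ n) :
    ((l.take m).count x) =
      (Finset.univ.filter (fun i : Fin n => (i : ℕ) < m ∧ l[(i : ℕ)]? = some x)).card := by
  rw [count_take_eq]
  apply Finset.card_bij (fun a ha => (⟨a, lt_of_lt_of_le (Finset.mem_range.mp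
    (Finset.mem_filter.mp ha).1) hm⟩ : Fin n))
  · intro a ha
    obtain ⟨h1, h2⟩ := Finset.mem_filter.mp ha
    simp only [Finset.mem_filter, Finset.mem_univ, true_and]
    exact ⟨Finset.mem_range.mp h1, h2⟩
  · intro a ha b hb hab
    simpa using congrArg Fin.val hab
  · intro b hb
    obtain ⟨-, h1, h2⟩ := Finset.mem_filter.mp hb
    exact ⟨b, Finset.mem_filter.mpr ⟨Finset.mem_range.mpr h1, h2⟩, rfl⟩

/-! ### Rank helpers -/

variable {n : ℕ}

def rk (s : Finset (Fin n)) (x : Fin n) : ℕ := (s.filter (· < x)).card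

lemma rk_lt {t : Finset (Fin n)} {a b : Fin n} (ha : a ∈ t) (hab : a < b) :
    rk t a < rk t b := by
  apply Finset.card_lt_card
  constructor
  · refine Finset.monotone_filter_right t ?_
    intro x _ hx
    exact lt_trans hx hab
  · intro hsub
    have : a ∈ t.filter (· < b) := Finset.mem_filter.mpr ⟨ha, hab⟩
    have := Finset.mem_filter.mp (hsub this)
    exact lt_irrefl a this.2

lemma rk_injOn {t : Finset (Fin n)} {a b : Fin n} (ha : a ∈ t) (hb : b ∈ t)
    (hr : rk t a = rk t b) : a = b := by
  rcases lt_trichotomy a b with hab | hab | hab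
  · exact absurd hr (Nat.ne_of_lt (rk_lt ha hab))
  · exact hab
  · exact absurd hr.symm (Nat.ne_of_lt (rk_lt hb hab))

lemma rk_image {s t : Finset (Fin n)} {f : Fin n → Fin n}
    (hmono : ∀ i ∈ s, ∀ j ∈ s, i < j → f i < f j) (himg : s.image f = t)
    {i : Fin n} (hi : i ∈ s) : rk t (f i) = rk s i := by
  have hinj : Set.InjOn f s := by
    intro a ha b hb hab
    rcases lt_trichotomy a b with hlt | heq | hlt
    · exact absurd hab (hmono a ha b hb hlt).ne
    · exact heq
    · exact absurd hab.symm (hmono b hb a ha hlt).ne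
  have hset : t.filter (· < f i) = (s.filter (· < i)).image f := by
    ext x
    simp only [Finset.mem_filter, Finset.mem_image]
    constructor
    · rintro ⟨hxt, hxlt⟩
      rw [← himg] at hxt
      obtain ⟨j, hj, rfl⟩ := Finset.mem_image.mp hxt
      refine ⟨j, ⟨hj, ?_⟩, rfl⟩
      rcases lt_trichotomy j i with hji | rfl | hji
      · exact hji
      · exact absurd hxlt (lt_irrefl _)
      · exact absurd (lt_trans hxlt (hmono i hi j hj hji)) (lt_irrefl _)
    · rintro ⟨j, hj, rfl⟩
      obtain ⟨hjs, hji⟩ := hj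
      exact ⟨himg ▸ Finset.mem_image_of_mem f hjs, hmono j hjs i hi hji⟩
  rw [rk, hset, Finset.card_image_of_injOn
    (hinj.mono (by intro x hx; exact (Finset.mem_filter.mp hx).1))]
  rfl

lemma mono_image_unique {s t : Finset (Fin n)} {f g : Fin n → Fin n}
    (hf : ∀ i ∈ s, ∀ j ∈ s, i < j → f i < f j) (hfi : s.image f = t)
    (hg : ∀ i ∈ s, ∀ j ∈ s, i < j → g i < g j) (hgi : s.image g = t)
    {i : Fin n} (hi : i ∈ s) : f i = g i := by
  refine rk_injOn (hfi ▸ Finset.mem_image_of_mem f hi) (hgi ▸ Finset.mem_image_of_mem g hi) ?_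
  rw [rk_image hf hfi hi, rk_image hg hgi hi]

/-! ### Patterns -/

def Av4321 {n : ℕ} (σ : Equiv.Perm (Fin n)) : Prop :=
  ¬ ∃ i j k l : Fin n, i < j ∧ j < k ∧ k < l ∧ σ l < σ k ∧ σ k < σ j ∧ σ j < σ i

def Av321 {n : ℕ} (σ : Equiv.Perm (Fin n)) : Prop :=
  ¬ ∃ i j k : Fin n, i < j ∧ j < k ∧ σ k < σ j ∧ σ j < σ i

lemma av_iff (τ : Equiv.Perm (Fin n)) (hinv : ∀ i, τ (τ i) = i)
    (hfpf : ∀ i, τ i ≠ i) : Av321 τ ↔ Av4321 τ := by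
  constructor
  · intro h ⟨i, j, k, l, h1, h2, h3, h4, h5, h6⟩
    exact h ⟨i, j, k, h1, h2, h5, h6⟩
  · intro h ⟨i, j, k, h1, h2, h4, h5⟩
    rcases lt_or_gt_of_ne (hfpf j) with hb | hb
    · exact h ⟨τ k, τ j, j, k, h4, hb, h2, h4,
        by rw [hinv]; exact hb, by rw [hinv, hinv]; exact h2⟩
    · exact h ⟨i, j, τ j, τ i, h1, hb, h5, by rw [hinv, hinv]; exact h1,
        by rw [hinv]; exact hb, h5⟩

/-! ### Opener set of a fixed-point-free involution -/

def OSet (τ : Equiv.Perm (Fin n)) : Finset (Fin n) :=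
  Finset.univ.filter (fun i => i < τ i)

section TauLemmas

variable {τ : Equiv.Perm (Fin n)} (hinv : ∀ i, τ (τ i) = i) (hfpf : ∀ i, τ i ≠ i)

lemma mem_OSet {i : Fin n} : i ∈ OSet τ ↔ i < τ i := by simp [OSet]

include hfpf in
lemma not_mem_OSet {i : Fin n} : i ∉ OSet τ ↔ τ i < i := by
  rw [mem_OSet, not_lt]
  exact ⟨fun h' => lt_of_le_of_ne h' (hfpf i), le_of_lt⟩

include hinv hfpf in
lemma tau_mem_OSet {i : Fin n} : τ i ∈ OSet τ ↔ i ∉ OSet τ := by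
  rw [mem_OSet, hinv, not_mem_OSet hfpf]

include hinv hfpf in
lemma image_OSet : (OSet τ).image τ = (OSet τ)ᶜ := by
  ext x
  rw [Finset.mem_image, Finset.mem_compl]
  constructor
  · rintro ⟨i, hi, rfl⟩
    rw [← hinv i] at hi
    exact ((tau_mem_OSet hinv hfpf).mp hi)
  · intro hx
    exact ⟨τ x, (tau_mem_OSet hinv hfpf).mpr hx, hinv x⟩

include hinv hfpf in
lemma image_OSet_compl : (OSet τ)ᶜ.image τ = OSet τ := by
  ext x
  rw [Finset.mem_image]
  constructor
  · rintro ⟨i, hi, rfl⟩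
    rw [Finset.mem_compl] at hi
    rwa [tau_mem_OSet hinv hfpf]
  · intro hx
    refine ⟨τ x, ?_, hinv x⟩
    rw [Finset.mem_compl, ← tau_mem_OSet hinv hfpf]
    simpa [hinv] using hx

include hinv in
lemma mono_OSet (hAv : Av321 τ) :
    ∀ i ∈ OSet τ, ∀ j ∈ OSet τ, i < j → τ i < τ j := by
  intro i hi j hj hij
  by_contra hle
  have hne : τ j ≠ τ i := fun e => (hij.ne (τ.injective e.symm)).elim
  have hlt : τ j < τ i := lt_of_le_of_ne (not_lt.mp hle) hne
  exact hAv ⟨i, j, τ j, hij, mem_OSet.mp hj, by rw [hinv]; exact mem_OSet.mp hj, hlt⟩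

include hinv hfpf in
lemma mono_OSet_compl (hAv : Av321 τ) :
    ∀ i ∈ (OSet τ)ᶜ, ∀ j ∈ (OSet τ)ᶜ, i < j → τ i < τ j := by
  intro i hi j hj hij
  by_contra hle
  have hne : τ j ≠ τ i := fun e => (hij.ne (τ.injective e.symm)).elim
  have hlt : τ j < τ i := lt_of_le_of_ne (not_lt.mp hle) hne
  have hio : τ i ∈ OSet τ := (tau_mem_OSet hinv hfpf).mpr (Finset.mem_compl.mp hi)
  have hjo : τ j ∈ OSet τ := (tau_mem_OSet hinv hfpf).mpr (Finset.mem_compl.mp hj)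
  have := mono_OSet hinv hAv (τ j) hjo (τ i) hio hlt
  rw [hinv, hinv] at this
  exact absurd hij (not_lt.mpr this.le)

end TauLemmas

lemma tau_unique {τ σ : Equiv.Perm (Fin n)}
    (hinvτ : ∀ i, τ (τ i) = i) (hfpfτ : ∀ i, τ i ≠ i) (hAvτ : Av321 τ)
    (hinvσ : ∀ i, σ (σ i) = i) (hfpfσ : ∀ i, σ i ≠ i) (hAvσ : Av321 σ)
    (hO : OSet τ = OSet σ) : τ = σ := by
  apply Equiv.ext
  intro i
  by_cases hi : i ∈ OSet τ
  · exact mono_image_unique (mono_OSet hinvτ hAvτ) (image_OSet hinvτ hfpfτ)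
      (hO ▸ mono_OSet hinvσ hAvσ) (by rw [hO, image_OSet hinvσ hfpfσ]) hi
  · have hi' : i ∈ (OSet τ)ᶜ := Finset.mem_compl.mpr hi
    exact mono_image_unique (mono_OSet_compl hinvτ hfpfτ hAvτ)
      (image_OSet_compl hinvτ hfpfτ)
      (by rw [hO]; exact mono_OSet_compl hinvσ hfpfσ hAvσ)
      (by rw [hO, image_OSet_compl hinvσ hfpfσ]) hi'

/-! ### The Dyck word of an involution -/

def wordFun (τ : Equiv.Perm (Fin n)) : Fin n → DyckStep :=
  fun i => if i < τ i then U else D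

lemma word_count (τ : Equiv.Perm (Fin n)) (x : DyckStep) (m : ℕ) (hm : m ≤ n) :
    ((List.ofFn (wordFun τ)).take m).count x
      = (Finset.univ.filter (fun i : Fin n => (i : ℕ) < m ∧ wordFun τ i = x)).card := by
  rw [count_take_card (n := n) _ x m hm]
  congr 1
  apply Finset.filter_congr
  intro i _
  have hg : (List.ofFn (wordFun τ))[(i : ℕ)]? = some (wordFun τ i) := by
    rw [List.getElem?_ofFn]
    simp [List.ofFnNthVal, i.isLt]
  simp [hg]

lemma filter_word_U (τ : Equiv.Perm (Fin n)) (m : ℕ) :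
    (Finset.univ.filter (fun i : Fin n => (i : ℕ) < m ∧ wordFun τ i = U))
      = (OSet τ).filter (fun i : Fin n => (i : ℕ) < m) := by
  ext i
  simp only [Finset.mem_filter, Finset.mem_univ, true_and, mem_OSet]
  rw [and_comm]
  apply and_congr_left
  intro _
  constructor
  · intro h2
    by_contra hc
    rw [wordFun, if_neg hc] at h2
    simp at h2
  · intro h2
    rw [wordFun, if_pos h2]

lemma filter_word_D (τ : Equiv.Perm (Fin n)) (m : ℕ) :
    (Finset.univ.filter (fun i : Fin n => (i : ℕ) < m ∧ wordFun τ i = D))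
      = (OSet τ)ᶜ.filter (fun i : Fin n => (i : ℕ) < m) := by
  ext i
  simp only [Finset.mem_filter, Finset.mem_compl, Finset.mem_univ, true_and, mem_OSet]
  rw [and_comm]
  apply and_congr_left
  intro _
  constructor
  · intro h2
    intro hc
    rw [wordFun, if_pos hc] at h2
    simp at h2
  · intro h2
    rw [wordFun, if_neg h2]

section WordOf

variable {τ : Equiv.Perm (Fin n)} (hinv : ∀ i, τ (τ i) = i) (hfpf : ∀ i, τ i ≠ i)

include hinv hfpf in
lemma word_prefix (m : ℕ) (hm : m ≤ n) :
    ((List.ofFn (wordFun τ)).take m).count D ≤ ((List.ofFn (wordFun τ)).take m).count U := by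
  rw [word_count τ U m hm, word_count τ D m hm, filter_word_U, filter_word_D]
  apply Finset.card_le_card_of_injOn τ
  · intro i hi
    obtain ⟨hi1, hi2⟩ := Finset.mem_filter.mp hi
    have hti : τ i < i := (not_mem_OSet hfpf).mp (Finset.mem_compl.mp hi1)
    refine Finset.mem_filter.mpr ⟨(tau_mem_OSet hinv hfpf).mpr (Finset.mem_compl.mp hi1), ?_⟩
    exact lt_trans (by exact_mod_cast hti) hi2
  · exact fun a _ b _ hab => τ.injective hab

omit hinv hfpf in
lemma word_take_all : (List.ofFn (wordFun τ)).take n = List.ofFn (wordFun τ) :=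
  List.take_of_length_le (by simp)

include hinv hfpf in
lemma word_balanced :
    (List.ofFn (wordFun τ)).count U = (List.ofFn (wordFun τ)).count D := by
  rw [← word_take_all (τ := τ), word_count τ U n le_rfl, word_count τ D n le_rfl,
    filter_word_U, filter_word_D]
  have h1 : (OSet τ).filter (fun i : Fin n => (i : ℕ) < n) = OSet τ :=
    Finset.filter_true_of_mem (fun i _ => i.isLt)
  have h2 : (OSet τ)ᶜ.filter (fun i : Fin n => (i : ℕ) < n) = (OSet τ)ᶜ :=
    Finset.filter_true_of_mem (fun i _ => i.isLt)
  rw [h1, h2, ← image_OSet hinv hfpf,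
    Finset.card_image_of_injOn (fun a _ b _ hab => τ.injective hab)]

/-- The Dyck word associated to a fixed-point-free involution. -/
def wordOf : DyckWord where
  toList := List.ofFn (wordFun τ)
  count_U_eq_count_D := word_balanced hinv hfpf
  count_D_le_count_U := by
    intro m
    have heq : (List.ofFn (wordFun τ)).take m = (List.ofFn (wordFun τ)).take (min m n) := by
      apply List.take_eq_take_iff.mpr
      simp
    rw [heq]
    exact word_prefix hinv hfpf (min m n) (min_le_right _ _)

include hinv hfpf in
lemma card_OSet_two_mul {h : ℕ} (hn : n = 2 * h) : (OSet τ).card = h := by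
  have h1 : (OSet τ)ᶜ.card = (OSet τ).card := by
    rw [← image_OSet hinv hfpf,
      Finset.card_image_of_injOn (fun a _ b _ hab => τ.injective hab)]
  have h2 := Finset.card_add_card_compl (OSet τ)
  rw [h1, Fintype.card_fin] at h2
  omega

include hinv hfpf in
lemma wordOf_semilength {h : ℕ} (hn : n = 2 * h) : (wordOf hinv hfpf).semilength = h := by
  have : (wordOf hinv hfpf).semilength = (List.ofFn (wordFun τ)).count U := rfl
  rw [this, ← word_take_all (τ := τ), word_count τ U n le_rfl, filter_word_U,
    Finset.filter_true_of_mem (fun i _ => i.isLt)]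
  exact card_OSet_two_mul hinv hfpf hn

end WordOf

/-! ### From a Dyck word to an involution -/

lemma exists_tau (h : ℕ) (p : DyckWord) (hp : p.semilength = h) :
    ∃ τ : Equiv.Perm (Fin (2 * h)), (∀ i, τ (τ i) = i) ∧ (∀ i, τ i ≠ i) ∧ Av321 τ ∧
      List.ofFn (wordFun τ) = p.toList := by
  have hlen : p.toList.length = 2 * h := by rw [← p.two_mul_semilength_eq_length, hp]
  set l := p.toList with hl
  set O : Finset (Fin (2 * h)) :=
    Finset.univ.filter (fun i : Fin (2 * h) => l[(i : ℕ)]? = some U) with hO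
  have hmemU : ∀ i : Fin (2 * h), i ∈ O ↔ l[(i : ℕ)]? = some U := by
    intro i; simp [hO]
  have hil : ∀ i : Fin (2 * h), (i : ℕ) < l.length := by
    intro i; rw [hlen]; exact i.isLt
  have hgetl : ∀ i : Fin (2 * h), l[(i : ℕ)]? = some (l[(i : ℕ)]'(hil i)) :=
    fun i => List.getElem?_eq_getElem (hil i)
  have hmemD : ∀ i : Fin (2 * h), i ∉ O ↔ l[(i : ℕ)]? = some D := by
    intro i
    rw [hmemU, hgetl i]
    rcases (l[(i : ℕ)]'(hil i)).dichotomy with hd | hd <;> simp [hd]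
  have hcount : ∀ x : DyckStep, ∀ m ≤ 2 * h, (l.take m).count x
      = (Finset.univ.filter (fun i : Fin (2 * h) => (i : ℕ) < m ∧ l[(i : ℕ)]? = some x)).card :=
    fun x m hm => count_take_card l x m hm
  have hfiltU : ∀ m : ℕ,
      (Finset.univ.filter (fun i : Fin (2 * h) => (i : ℕ) < m ∧ l[(i : ℕ)]? = some U))
        = O.filter (fun i : Fin (2 * h) => (i : ℕ) < m) := by
    intro m
    ext i
    simp only [Finset.mem_filter, Finset.mem_univ, true_and, hmemU]
    exact and_comm
  have hfiltD : ∀ m : ℕ,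
      (Finset.univ.filter (fun i : Fin (2 * h) => (i : ℕ) < m ∧ l[(i : ℕ)]? = some D))
        = Oᶜ.filter (fun i : Fin (2 * h) => (i : ℕ) < m) := by
    intro m
    ext i
    simp only [Finset.mem_filter, Finset.mem_univ, true_and, Finset.mem_compl, hmemD]
    exact and_comm
  have htake : l.take (2 * h) = l := List.take_of_length_le (le_of_eq hlen)
  have hcardO : O.card = h := by
    have h1 : l.count U = h := hp
    rw [← htake, hcount U (2 * h) le_rfl, hfiltU,
      Finset.filter_true_of_mem (fun i _ => i.isLt)] at h1
    exact h1
  have hcardC : Oᶜ.card = h := by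
    have := Finset.card_add_card_compl O
    rw [Fintype.card_fin, hcardO] at this
    omega
  set eO := O.orderIsoOfFin hcardO with heO
  set eC := Oᶜ.orderIsoOfFin hcardC with heC
  have core : ∀ k : Fin h, ((eO k : Fin (2 * h)) : Fin (2 * h)) < (eC k : Fin (2 * h)) := by
    intro k
    by_contra hc
    have hne : (eC k : Fin (2 * h)) ≠ (eO k : Fin (2 * h)) := by
      intro he
      have h1 := (eO k).2
      have h2 := (eC k).2
      rw [Finset.mem_compl, he] at h2
      exact h2 h1
    have hlt : (eC k : Fin (2 * h)) < (eO k : Fin (2 * h)) :=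
      lt_of_le_of_ne (not_lt.mp hc) hne
    set c : Fin (2 * h) := (eC k : Fin (2 * h)) with hc'
    set m : ℕ := (c : ℕ) + 1 with hm'
    have hm : m ≤ 2 * h := c.isLt
    have hD : (k : ℕ) + 1 ≤ (Oᶜ.filter (fun i : Fin (2 * h) => (i : ℕ) < m)).card := by
      have hIic : ((Finset.Iic k).card : ℕ) = (k : ℕ) + 1 := by rw [Fin.card_Iic]
      rw [← hIic]
      apply Finset.card_le_card_of_injOn (fun j => (eC j : Fin (2 * h)))
      · intro j hj
        refine Finset.mem_filter.mpr ⟨(eC j).2, ?_⟩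
        have h3 : eC j ≤ eC k := eC.monotone (Finset.mem_Iic.mp hj)
        have h4 : ((eC j : Fin (2 * h)) : ℕ) ≤ (c : ℕ) := h3
        show ((eC j : Fin (2 * h)) : ℕ) < m
        omega
      · intro a _ b _ hab
        exact eC.injective (Subtype.ext hab)
    have hU : (O.filter (fun i : Fin (2 * h) => (i : ℕ) < m)).card ≤ (k : ℕ) := by
      have hIio : ((Finset.Iio k).card : ℕ) = (k : ℕ) := by rw [Fin.card_Iio]
      rw [← hIio]
      apply Finset.card_le_card_of_injOn
        (fun i => if hi : i ∈ O then eO.symm ⟨i, hi⟩ else k)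
      · intro i hi
        obtain ⟨hiO, him⟩ := Finset.mem_filter.mp hi
        simp only [dif_pos hiO]
        refine Finset.mem_Iio.mpr ?_
        have h1 : (⟨i, hiO⟩ : {x // x ∈ O}) < eO k := by
          change i < (eO k : Fin (2 * h))
          have h2 : ((eO k : Fin (2 * h)) : ℕ) > (c : ℕ) := hlt
          exact Fin.lt_def.mpr (by omega)
        have h5 := eO.symm.strictMono h1
        rwa [OrderIso.symm_apply_apply] at h5
      · intro a ha b hb hab
        obtain ⟨haO, -⟩ := Finset.mem_filter.mp ha
        obtain ⟨hbO, -⟩ := Finset.mem_filter.mp hb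
        simp only [dif_pos haO, dif_pos hbO] at hab
        exact congrArg Subtype.val (eO.symm.injective hab)
    have hdyck := p.count_D_le_count_U m
    rw [← hl] at hdyck
    rw [hcount D m hm, hcount U m hm, hfiltD, hfiltU] at hdyck
    omega
  set f : Fin (2 * h) → Fin (2 * h) := fun i =>
    if hi : i ∈ O then (eC (eO.symm ⟨i, hi⟩) : Fin (2 * h))
    else (eO (eC.symm ⟨i, Finset.mem_compl.mpr hi⟩) : Fin (2 * h)) with hf
  have hfO : ∀ i (hi : i ∈ O), f i = (eC (eO.symm ⟨i, hi⟩) : Fin (2 * h)) := by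
    intro i hi; rw [hf]; exact dif_pos hi
  have hfC : ∀ i (hi : i ∉ O), f i = (eO (eC.symm ⟨i, Finset.mem_compl.mpr hi⟩) : Fin (2 * h)) := by
    intro i hi; rw [hf]; exact dif_neg hi
  have hfO_mem : ∀ i, i ∈ O → f i ∉ O := by
    intro i hi
    rw [hfO i hi]
    have := (eC (eO.symm ⟨i, hi⟩)).2
    rwa [Finset.mem_compl] at this
  have hfC_mem : ∀ i, i ∉ O → f i ∈ O := by
    intro i hi
    rw [hfC i hi]
    exact (eO (eC.symm ⟨i, Finset.mem_compl.mpr hi⟩)).2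
  have hinvol : Function.Involutive f := by
    intro i
    by_cases hi : i ∈ O
    · have h1 := hfO i hi
      have h2 := hfO_mem i hi
      rw [h1] at h2 ⊢
      rw [hfC _ h2]
      have h3 : (⟨(eC (eO.symm ⟨i, hi⟩) : Fin (2 * h)), Finset.mem_compl.mpr h2⟩ :
          {x // x ∈ Oᶜ}) = eC (eO.symm ⟨i, hi⟩) := Subtype.ext rfl
      rw [h3, OrderIso.symm_apply_apply, OrderIso.apply_symm_apply]
    · have h1 := hfC i hi
      have h2 := hfC_mem i hi
      rw [h1] at h2 ⊢
      rw [hfO _ h2]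
      have h3 : (⟨(eO (eC.symm ⟨i, Finset.mem_compl.mpr hi⟩) : Fin (2 * h)), h2⟩ : {x // x ∈ O})
          = eO (eC.symm ⟨i, Finset.mem_compl.mpr hi⟩) := Subtype.ext rfl
      rw [h3, OrderIso.symm_apply_apply, OrderIso.apply_symm_apply]
  have hlt1 : ∀ i, i ∈ O → i < f i := by
    intro i hi
    rw [hfO i hi]
    have := core (eO.symm ⟨i, hi⟩)
    rwa [OrderIso.apply_symm_apply] at this
  have hlt2 : ∀ i, i ∉ O → f i < i := by
    intro i hi
    rw [hfC i hi]
    have := core (eC.symm ⟨i, Finset.mem_compl.mpr hi⟩)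
    rwa [OrderIso.apply_symm_apply] at this
  refine ⟨hinvol.toPerm f, ?_, ?_, ?_, ?_⟩
  · intro i; exact hinvol i
  · intro i
    simp only [Function.Involutive.coe_toPerm]
    by_cases hi : i ∈ O
    · exact (hlt1 i hi).ne'
    · exact (hlt2 i hi).ne
  · rintro ⟨i, j, k, h1, h2, h4, h5⟩
    simp only [Function.Involutive.coe_toPerm] at h4 h5
    have key : ∀ x y : Fin (2 * h), x < y → f y < f x → x ∈ O ∧ y ∉ O := by
      intro x y hxy hfxy
      by_cases hx : x ∈ O <;> by_cases hy : y ∈ O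
      · exfalso
        rw [hfO x hx, hfO y hy] at hfxy
        have hxy' : (⟨x, hx⟩ : {a // a ∈ O}) < ⟨y, hy⟩ := hxy
        have := eC.strictMono (eO.symm.strictMono hxy')
        exact absurd hfxy (not_lt.mpr this.le)
      · exact ⟨hx, hy⟩
      · exfalso
        have := lt_trans (lt_trans (hlt2 x hx) hxy) (hlt1 y hy)
        exact absurd hfxy (not_lt.mpr this.le)
      · exfalso
        rw [hfC x hx, hfC y hy] at hfxy
        have hxy' : (⟨x, Finset.mem_compl.mpr hx⟩ : {a // a ∈ Oᶜ})
            < ⟨y, Finset.mem_compl.mpr hy⟩ := hxy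
        have := eO.strictMono (eC.symm.strictMono hxy')
        exact absurd hfxy (not_lt.mpr this.le)
    exact (key i j h1 h5).2 (key j k h2 h4).1
  · apply List.ext_getElem
    · simp [hlen]
    · intro i hi1 hi2
      have hi : i < 2 * h := by rw [← hlen]; exact hi2
      rw [List.getElem_ofFn]
      by_cases hio : (⟨i, hi⟩ : Fin (2 * h)) ∈ O
      · have hUi : l[i] = U := by
          have h6 := (hmemU _).mp hio
          rw [hgetl ⟨i, hi⟩] at h6
          exact Option.some.inj h6
        rw [hUi, wordFun, if_pos]
        simp only [Function.Involutive.coe_toPerm]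
        exact hlt1 _ hio
      · have hDi : l[i] = D := by
          have h6 := (hmemD _).mp hio
          rw [hgetl ⟨i, hi⟩] at h6
          exact Option.some.inj h6
        rw [hDi, wordFun, if_neg]
        simp only [Function.Involutive.coe_toPerm, not_lt]
        exact (hlt2 _ hio).le

lemma OSet_eq_of_wordFun {τ σ : Equiv.Perm (Fin n)} (hw : wordFun τ = wordFun σ) :
    OSet τ = OSet σ := by
  ext i
  rw [mem_OSet, mem_OSet]
  have hlam := congrFun hw i
  rw [wordFun, wordFun] at hlam
  constructor <;> intro h1 <;> by_contra h2
  · rw [if_pos h1, if_neg h2] at hlam; simp at hlam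
  · rw [if_neg h2, if_pos h1] at hlam; simp at hlam

lemma hmul_iff {τ : Equiv.Perm (Fin n)} : τ * τ = 1 ↔ ∀ i, τ (τ i) = i := by
  constructor
  · intro hm i
    rw [← Equiv.Perm.mul_apply, hm, Equiv.Perm.one_apply]
  · intro hi
    apply Equiv.ext
    intro i
    rw [Equiv.Perm.mul_apply, hi, Equiv.Perm.one_apply]

theorem fpf_involutions_avoiding_4321 (h : ℕ) :
    Nat.card {τ : Equiv.Perm (Fin (2 * h)) //
        τ * τ = 1 ∧ (∀ i, τ i ≠ i) ∧ Av4321 τ} =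
      Nat.choose (2 * h) h / (h + 1) ∧
    ∀ τ : Equiv.Perm (Fin (2 * h)), τ * τ = 1 → (∀ i, τ i ≠ i) →
      (Av321 τ ↔ Av4321 τ) := by
  have hiff : ∀ τ : Equiv.Perm (Fin (2 * h)), τ * τ = 1 → (∀ i, τ i ≠ i) →
      (Av321 τ ↔ Av4321 τ) := fun τ hm hf => av_iff τ (hmul_iff.mp hm) hf
  refine ⟨?_, hiff⟩
  have e1 : {τ : Equiv.Perm (Fin (2 * h)) // τ * τ = 1 ∧ (∀ i, τ i ≠ i) ∧ Av4321 τ} ≃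
      {τ : Equiv.Perm (Fin (2 * h)) // τ * τ = 1 ∧ (∀ i, τ i ≠ i) ∧ Av321 τ} :=
    Equiv.subtypeEquivRight fun τ => by
      constructor
      · rintro ⟨h1, h2, h3⟩
        exact ⟨h1, h2, (hiff τ h1 h2).mpr h3⟩
      · rintro ⟨h1, h2, h3⟩
        exact ⟨h1, h2, (hiff τ h1 h2).mp h3⟩
  rw [Nat.card_congr e1]
  set F : {τ : Equiv.Perm (Fin (2 * h)) // τ * τ = 1 ∧ (∀ i, τ i ≠ i) ∧ Av321 τ} →
      {p : DyckWord // p.semilength = h} :=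
    fun t => ⟨wordOf (hmul_iff.mp t.2.1) t.2.2.1,
      wordOf_semilength (hmul_iff.mp t.2.1) t.2.2.1 rfl⟩ with hF
  have hinj : Function.Injective F := by
    rintro ⟨τ, hτ1, hτ2, hτ3⟩ ⟨σ, hσ1, hσ2, hσ3⟩ hab
    have hw : List.ofFn (wordFun τ) = List.ofFn (wordFun σ) :=
      congrArg (fun q => q.1.toList) hab
    have hwf : wordFun τ = wordFun σ := List.ofFn_inj.mp hw
    exact Subtype.ext (tau_unique (hmul_iff.mp hτ1) hτ2 hτ3 (hmul_iff.mp hσ1) hσ2 hσ3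
      (OSet_eq_of_wordFun hwf))
  have hsurj : Function.Surjective F := by
    rintro ⟨p, hp⟩
    obtain ⟨τ, hinv, hfpf, hAv, hword⟩ := exists_tau h p hp
    refine ⟨⟨τ, hmul_iff.mpr hinv, hfpf, hAv⟩, ?_⟩
    apply Subtype.ext
    apply DyckWord.ext
    exact hword
  rw [Nat.card_eq_of_bijective F ⟨hinj, hsurj⟩, Nat.card_eq_fintype_card,
    DyckWord.card_dyckWord_semilength_eq_catalan, catalan_eq_centralBinom_div]
  rfl
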